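/- Let f be a quadratic polynomial as in the context and N ≥ 1 an integer. For every real z with 3 ≤ z ≤ A one has V(A) ≤ V(z) ≤ V(A)·exp(2·δ(z)). -/

import Mathlib

open Finset

noncomputable section

/-- The Kronecker symbol `(D/p)` at a prime `p`. -/
def kroneckerPrime (D : ℤ) (p : ℕ) : ℤ :=
  if p = 2 then (if D % 2 = 0 then 0 else if D % 8 = 1 ∨ D % 8 = 7 then 1 else -1)
  else jacobiSym D p

/-- The Kronecker symbol `χ_D(n) = (D/n)` for `n : ℕ`, extended multiplicatively. -/
def kronecker (D : ℤ) (n : ℕ) : ℤ :=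
  n.factorization.prod fun p k => kroneckerPrime D p ^ k

/-- `L(1, χ_D) = ∑_{n ≥ 1} χ_D(n)/n`, as the limit of its partial sums. -/
def LOne (D : ℤ) : ℝ :=
  Filter.limUnder Filter.atTop fun N : ℕ => ∑ n ∈ Finset.Icc 1 N, (kronecker D n : ℝ) / n

/-- `λ = 1 * χ_D`, i.e. `λ(n) = ∑_{d ∣ n} χ_D(d)`. -/
def lamArith (D : ℤ) (n : ℕ) : ℤ := ∑ d ∈ n.divisors, kronecker D d

/-- The quadratic polynomial `f(n) = a n² + b n + c`. -/
def fInt (a b c n : ℤ) : ℤ := a * n ^ 2 + b * n + c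

/-- `ρ(d) = #{n mod d : f(n) ≡ 0 (mod d)}`. -/
def rho (a b c : ℤ) (d : ℕ) : ℕ :=
  ((Finset.range d).filter fun n : ℕ => (d : ℤ) ∣ fInt a b c (n : ℤ)).card

/-- `A = #𝒜 = #{n ∈ ℤ : 0 ≤ f(n) ≤ N}`. -/
def Acard (a b c N : ℤ) : ℕ := Set.ncard {n : ℤ | 0 ≤ fInt a b c n ∧ fInt a b c n ≤ N}

/-- `A_d = #{n ∈ 𝒜 : d ∣ f(n)}`. -/
def Adcard (a b c N : ℤ) (d : ℕ) : ℕ :=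
  Set.ncard {n : ℤ | 0 ≤ fInt a b c n ∧ fInt a b c n ≤ N ∧ (d : ℤ) ∣ fInt a b c n}

/-- The finset of primes `p < x`. -/
def primesLT (x : ℝ) : Finset ℕ :=
  (Finset.range (Nat.ceil x + 1)).filter fun p => p.Prime ∧ (p : ℝ) < x

/-- `V(x) = ∏_{p < x} (1 - ρ(p)/p)`. -/
def Vprod (a b c : ℤ) (x : ℝ) : ℝ := ∏ p ∈ primesLT x, (1 - (rho a b c p : ℝ) / p)

/-- `W(x) = ∏_{p < x} (1 - 1/p)(1 - χ_D(p)/p)`. -/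
def Wprod (D : ℤ) (x : ℝ) : ℝ :=
  ∏ p ∈ primesLT x, ((1 - 1 / (p : ℝ)) * (1 - (kronecker D p : ℝ) / p))

/-- `P(z) = ∏_{p < z} p`. -/
def Pprod (z : ℝ) : ℕ := ∏ p ∈ primesLT z, p

/-- `S(𝒜, z) = #{n ∈ 𝒜 : gcd(f(n), P(z)) = 1}`. -/
def Ssieve (a b c N : ℤ) (z : ℝ) : ℕ :=
  Set.ncard {n : ℤ | 0 ≤ fInt a b c n ∧ fInt a b c n ≤ N ∧
    Int.gcd (fInt a b c n) (Pprod z) = 1}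

/-- `S(𝒜_p, z) = #{n ∈ 𝒜 : p ∣ f(n), gcd(f(n), P(z)) = 1}`. -/
def SsieveP (a b c N : ℤ) (p : ℕ) (z : ℝ) : ℕ :=
  Set.ncard {n : ℤ | 0 ≤ fInt a b c n ∧ fInt a b c n ≤ N ∧ (p : ℤ) ∣ fInt a b c n ∧
    Int.gcd (fInt a b c n) (Pprod z) = 1}

/-- `π_f(N) = #{n ∈ ℤ : 0 ≤ f(n) ≤ N, f(n) prime}`. -/
def piF (a b c N : ℤ) : ℕ :=
  Set.ncard {n : ℤ | 0 ≤ fInt a b c n ∧ fInt a b c n ≤ N ∧ Prime (fInt a b c n)}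

/-- `δ(x) = ∑_{x ≤ p ≤ A} λ(p)/p`. -/
def deltaSum (a b c N D : ℤ) (x : ℝ) : ℝ :=
  ∑ p ∈ (Finset.range (Acard a b c N + 1)).filter (fun p : ℕ => p.Prime ∧ x ≤ (p : ℝ)),
    (lamArith D p : ℝ) / p

/-- `β = -log(L(1,χ_D) · log|D|)`. -/
def betaE (D : ℤ) : ℝ := - Real.log (LOne D * Real.log |(D : ℝ)|)

/-- `g(Δ) = Δ e^{-β/2}` for `Δ > 0` and `|Δ|/(4|a| - e^{-β/2})` for `Δ < 0`. -/
def gDisc (a D : ℤ) : ℝ :=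
  if 0 < D then (D : ℝ) * Real.exp (-(betaE D) / 2)
  else |(D : ℝ)| / (4 * |(a : ℝ)| - Real.exp (-(betaE D) / 2))

-- AUX LEMMAS

lemma kronecker_one'' (D : ℤ) : kronecker D 1 = 1 := by
  simp [kronecker]

lemma kronecker_prime' (D : ℤ) {p : ℕ} (hp : p.Prime) :
    kronecker D p = kroneckerPrime D p := by
  unfold kronecker
  rw [hp.factorization]
  simp

lemma kroneckerPrime_trichotomy (D : ℤ) (p : ℕ) :
    kroneckerPrime D p = 0 ∨ kroneckerPrime D p = 1 ∨ kroneckerPrime D p = -1 := by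
  unfold kroneckerPrime
  split_ifs with h1 h2 h3
  · tauto
  · tauto
  · tauto
  · exact jacobiSym.trichotomy D p

lemma lam_prime (D : ℤ) {p : ℕ} (hp : p.Prime) :
    lamArith D p = 1 + kroneckerPrime D p := by
  unfold lamArith
  rw [hp.divisors, Finset.sum_pair hp.one_lt.ne, kronecker_one'', kronecker_prime' D hp]

lemma lam_nonneg (D : ℤ) {p : ℕ} (hp : p.Prime) : 0 ≤ lamArith D p := by
  rw [lam_prime D hp]
  rcases kroneckerPrime_trichotomy D p with h | h | h <;> rw [h] <;> norm_num

lemma lam_le_two (D : ℤ) {p : ℕ} (hp : p.Prime) : lamArith D p ≤ 2 := by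
  rw [lam_prime D hp]
  rcases kroneckerPrime_trichotomy D p with h | h | h <;> rw [h] <;> norm_num

lemma rho_le_self (a b c : ℤ) (d : ℕ) : rho a b c d ≤ d := by
  classical
  calc rho a b c d ≤ (Finset.range d).card := Finset.card_filter_le _ _
  _ = d := Finset.card_range d

lemma rho_eq_card (a b c : ℤ) (p : ℕ) [NeZero p] :
    rho a b c p = (Finset.univ.filter fun x : ZMod p =>
      (a : ZMod p) * x ^ 2 + (b : ZMod p) * x + (c : ZMod p) = 0).card := by
  classical
  unfold rho
  apply Finset.card_bij (fun (n : ℕ) (_ : n ∈ (Finset.range p).filter fun n : ℕ =>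
      (p : ℤ) ∣ fInt a b c (n : ℤ)) => (n : ZMod p))
  · intro n hn
    simp only [Finset.mem_filter, Finset.mem_range] at hn
    simp only [Finset.mem_filter, Finset.mem_univ, true_and]
    have h0 : ((fInt a b c (n : ℤ) : ℤ) : ZMod p) = 0 :=
      (ZMod.intCast_zmod_eq_zero_iff_dvd _ p).mpr hn.2
    rw [fInt] at h0
    push_cast at h0
    exact h0
  · intro n hn m hm h
    simp only [Finset.mem_filter, Finset.mem_range] at hn hm
    have h1 : ((n : ZMod p)).val = n := ZMod.val_cast_of_lt hn.1
    have h2 : ((m : ZMod p)).val = m := ZMod.val_cast_of_lt hm.1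
    rw [← h1, ← h2, h]
  · intro x hx
    simp only [Finset.mem_filter, Finset.mem_univ, true_and] at hx
    have hxv : ((x.val : ℕ) : ZMod p) = x := by
      simp [ZMod.natCast_val, ZMod.cast_id]
    refine ⟨x.val, ?_, hxv⟩
    simp only [Finset.mem_filter, Finset.mem_range]
    refine ⟨ZMod.val_lt x, ?_⟩
    rw [← ZMod.intCast_zmod_eq_zero_iff_dvd, fInt]
    push_cast
    rw [hxv]
    exact hx

lemma rho_le_lam (a b c D : ℤ) (hD : D = b ^ 2 - 4 * a * c)
    (hgcd : Int.gcd a (Int.gcd b c) = 1) {p : ℕ} (hp : p.Prime) (h3 : 3 ≤ p) :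
    (rho a b c p : ℤ) ≤ lamArith D p := by
  classical
  haveI : Fact p.Prime := ⟨hp⟩
  have hp2 : p ≠ 2 := by omega
  set A : ZMod p := (a : ZMod p) with hA
  set B : ZMod p := (b : ZMod p) with hB
  set C : ZMod p := (c : ZMod p) with hC
  have hDbar : ((D : ZMod p)) = B ^ 2 - 4 * A * C := by rw [hD]; push_cast; ring
  have hlam : lamArith D p = 1 + quadraticChar (ZMod p) ((D : ZMod p)) := by
    rw [lam_prime D hp]
    unfold kroneckerPrime
    rw [if_neg hp2, ← jacobiSym.legendreSym.to_jacobiSym p D]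
    rfl
  rw [rho_eq_card a b c p, hlam]
  set S := (Finset.univ.filter fun x : ZMod p => A * x ^ 2 + B * x + C = 0) with hS
  by_cases hA0 : A = 0
  · by_cases hB0 : B = 0
    · -- A = 0, B = 0
      have hC0 : C ≠ 0 := by
        intro hC0
        have hpa : (p : ℤ) ∣ a := by
          rwa [← ZMod.intCast_zmod_eq_zero_iff_dvd]
        have hpb : (p : ℤ) ∣ b := by
          rwa [← ZMod.intCast_zmod_eq_zero_iff_dvd]
        have hpc : (p : ℤ) ∣ c := by
          rwa [← ZMod.intCast_zmod_eq_zero_iff_dvd]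
        have h1 : (p : ℤ) ∣ (Int.gcd b c : ℤ) := Int.dvd_coe_gcd hpb hpc
        have h2 : (p : ℤ) ∣ (Int.gcd a (Int.gcd b c : ℤ) : ℤ) := Int.dvd_coe_gcd hpa h1
        rw [hgcd] at h2
        have := Int.le_of_dvd one_pos h2
        omega
      have hSempty : S = ∅ := by
        ext x
        simp only [hS, Finset.mem_filter, Finset.mem_univ, true_and, Finset.notMem_empty,
          iff_false, hA0, hB0, zero_mul, add_zero, zero_add]
        exact hC0
      have hD0 : (D : ZMod p) = 0 := by rw [hDbar, hA0, hB0]; ring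
      rw [hSempty, hD0]
      simp
    · -- A = 0, B ≠ 0
      have hχ : quadraticChar (ZMod p) ((D : ZMod p)) = 1 := by
        have hDsq : (D : ZMod p) = B ^ 2 := by rw [hDbar, hA0]; ring
        rw [hDsq, map_pow]
        exact quadraticChar_sq_one hB0
      have hcard : S.card ≤ 1 := by
        apply Finset.card_le_one.mpr
        intro x hx y hy
        simp only [hS, Finset.mem_filter, Finset.mem_univ, true_and, hA0, zero_mul,
          zero_add] at hx hy
        have hxy : B * x = B * y := by
          have hx' : B * x = -C := by linear_combination hx
          have hy' : B * y = -C := by linear_combination hy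
          rw [hx', hy']
        exact mul_left_cancel₀ hB0 hxy
      rw [hχ]
      have : (S.card : ℤ) ≤ 1 := by exact_mod_cast hcard
      omega
  · -- A ≠ 0
    have h2Z : ((2 : ℕ) : ZMod p) ≠ 0 := by
      rw [Ne, ZMod.natCast_eq_zero_iff]
      intro h
      have := Nat.le_of_dvd (by norm_num) h
      omega
    have h2' : (2 : ZMod p) ≠ 0 := by exact_mod_cast h2Z
    have h2A : 2 * A ≠ 0 := mul_ne_zero h2' hA0
    have h4A : 4 * A ≠ 0 := by
      have h4 : (4 : ZMod p) = 2 * 2 := by norm_num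
      rw [h4, mul_assoc]
      exact mul_ne_zero h2' h2A
    have key : ∀ x : ZMod p, (A * x ^ 2 + B * x + C = 0) ↔
        ((2 * A * x + B) ^ 2 = (D : ZMod p)) := by
      intro x
      rw [hDbar]
      constructor
      · intro h
        linear_combination 4 * A * h
      · intro h
        have h2 : (4 * A) * (A * x ^ 2 + B * x + C)
            = (2 * A * x + B) ^ 2 - (B ^ 2 - 4 * A * C) := by ring
        rw [h, sub_self] at h2
        exact (mul_eq_zero.mp h2).resolve_left h4A
    have hcard : S.card = (Finset.univ.filter fun y : ZMod p => y ^ 2 = (D : ZMod p)).card := by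
      apply Finset.card_bij (fun (x : ZMod p) (_ : x ∈ S) => 2 * A * x + B)
      · intro x hx
        simp only [hS, Finset.mem_filter, Finset.mem_univ, true_and] at hx ⊢
        exact (key x).mp hx
      · intro x hx y hy h
        have h' : 2 * A * x = 2 * A * y := add_right_cancel h
        exact mul_left_cancel₀ h2A h'
      · intro y hy
        simp only [Finset.mem_filter, Finset.mem_univ, true_and] at hy
        have hval : 2 * A * ((y - B) * (2 * A)⁻¹) + B = y := by
          field_simp
          ring
        refine ⟨(y - B) * (2 * A)⁻¹, ?_, hval⟩
        simp only [hS, Finset.mem_filter, Finset.mem_univ, true_and]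
        rw [key, hval]
        exact hy
    have hsq := quadraticChar_card_sqrts (F := ZMod p)
      (by rw [ZMod.ringChar_zmod_n]; exact hp2) ((D : ZMod p))
    have hset : ({x : ZMod p | x ^ 2 = (D : ZMod p)}.toFinset) =
        (Finset.univ.filter fun y : ZMod p => y ^ 2 = (D : ZMod p)) := Set.toFinset_setOf _
    rw [hset] at hsq
    rw [hcard, hsq]
    linarith

lemma key_ineq {p : ℕ} (h3 : 3 ≤ p) {r l : ℤ} (hr0 : 0 ≤ r) (hrl : r ≤ l) (hl2 : l ≤ 2) :
    1 ≤ (1 - (r : ℝ) / p) * Real.exp (2 * (l : ℝ) / p) := by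
  have hp : (3 : ℝ) ≤ p := by exact_mod_cast h3
  have hp0 : (0 : ℝ) < p := by linarith
  have hr0' : (0 : ℝ) ≤ r := by exact_mod_cast hr0
  have hrl' : (r : ℝ) ≤ l := by exact_mod_cast hrl
  have hl2' : (l : ℝ) ≤ 2 := by exact_mod_cast hl2
  set t : ℝ := (l : ℝ) / p with ht
  set u : ℝ := (r : ℝ) / p with hu
  have hu0 : 0 ≤ u := div_nonneg hr0' hp0.le
  have hut : u ≤ t := by rw [ht, hu]; gcongr
  have ht0 : 0 ≤ t := le_trans hu0 hut
  have ht23 : t ≤ 2 / 3 := by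
    rw [ht, div_le_div_iff₀ hp0 (by norm_num)]
    nlinarith
  have h2t : 2 * (l : ℝ) / p = 4 * (t / 2) := by rw [ht]; ring
  have hexp : (1 + t / 2) ^ 4 ≤ Real.exp (2 * (l : ℝ) / p) := by
    have h1 : 1 + t / 2 ≤ Real.exp (t / 2) := by
      have := Real.add_one_le_exp (t / 2)
      linarith
    have h1' : (0 : ℝ) ≤ 1 + t / 2 := by linarith
    calc (1 + t / 2) ^ 4 ≤ (Real.exp (t / 2)) ^ 4 := by gcongr
      _ = Real.exp (4 * (t / 2)) := by
          rw [← Real.exp_nat_mul]; norm_num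
      _ = Real.exp (2 * (l : ℝ) / p) := by rw [h2t]
  have hpoly1 : 1 ≤ (1 - t) * (1 + t / 2) ^ 4 := by
    nlinarith [mul_nonneg ht0 ht0, mul_nonneg (mul_nonneg ht0 ht0) ht0,
      mul_nonneg (mul_nonneg (mul_nonneg ht0 ht0) ht0) ht0,
      mul_nonneg ht0 (sub_nonneg.mpr ht23), sq_nonneg (t - 2/3),
      mul_nonneg (mul_nonneg ht0 ht0) (sub_nonneg.mpr ht23),
      mul_nonneg (mul_nonneg (mul_nonneg ht0 ht0) ht0) (sub_nonneg.mpr ht23)]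
  have hpoly : 1 ≤ (1 - u) * (1 + t / 2) ^ 4 := by
    have hpow : (0:ℝ) ≤ (1 + t / 2) ^ 4 := by positivity
    nlinarith [mul_le_mul_of_nonneg_right (by linarith : 1 - t ≤ 1 - u) hpow]
  have h1u : 0 ≤ 1 - u := by linarith
  calc (1 : ℝ) ≤ (1 - u) * (1 + t / 2) ^ 4 := hpoly
    _ ≤ (1 - u) * Real.exp (2 * (l : ℝ) / p) := by
        exact mul_le_mul_of_nonneg_left hexp h1u

lemma mem_primesLT {x : ℝ} {p : ℕ} : p ∈ primesLT x ↔ p.Prime ∧ (p : ℝ) < x := by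
  unfold primesLT
  simp only [Finset.mem_filter, Finset.mem_range]
  constructor
  · tauto
  · rintro ⟨h1, h2⟩
    refine ⟨?_, h1, h2⟩
    have hc : (p : ℝ) < ((⌈x⌉₊ + 1 : ℕ) : ℝ) := by
      push_cast
      have := Nat.le_ceil x
      linarith
    exact_mod_cast hc

theorem V_comparison (a b c D N : ℤ)
    (ha : a ≠ 0) (hgcd : Int.gcd a (Int.gcd b c) = 1)
    (hpar : Odd (a + b) ∨ Odd c)
    (hD : D = b ^ 2 - 4 * a * c) (hsq : ¬ IsSquare D)
    (hN : 1 ≤ N) (z : ℝ) (hz : 3 ≤ z) (hzA : z ≤ (Acard a b c N : ℝ)) :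
    Vprod a b c (Acard a b c N : ℝ) ≤ Vprod a b c z ∧
      Vprod a b c z ≤ Vprod a b c (Acard a b c N : ℝ) *
        Real.exp (2 * deltaSum a b c N D z) := by
  classical
  have hsub : primesLT z ⊆ primesLT ((Acard a b c N : ℕ) : ℝ) := by
    intro p hp
    rw [mem_primesLT] at hp ⊢
    exact ⟨hp.1, lt_of_lt_of_le hp.2 hzA⟩
  have hfac0 : ∀ p : ℕ, p.Prime → 0 ≤ 1 - (rho a b c p : ℝ) / p := by
    intro p hp
    have hp0 : (0 : ℝ) < p := by exact_mod_cast hp.pos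
    have h1 : (rho a b c p : ℝ) ≤ p := by exact_mod_cast rho_le_self a b c p
    have h2 : (rho a b c p : ℝ) / p ≤ 1 := div_le_one_of_le₀ h1 hp0.le
    linarith
  have hfac1 : ∀ p : ℕ, p.Prime → 1 - (rho a b c p : ℝ) / p ≤ 1 := by
    intro p hp
    have hp0 : (0 : ℝ) < p := by exact_mod_cast hp.pos
    have h2 : 0 ≤ (rho a b c p : ℝ) / p := div_nonneg (by positivity) hp0.le
    linarith
  have hVz : 0 ≤ Vprod a b c z := by
    apply Finset.prod_nonneg
    intro p hp
    exact hfac0 p (mem_primesLT.mp hp).1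
  have hkey : (∏ p ∈ primesLT ((Acard a b c N : ℕ) : ℝ) \ primesLT z,
      (1 - (rho a b c p : ℝ) / p)) * Vprod a b c z
      = Vprod a b c ((Acard a b c N : ℕ) : ℝ) := by
    simp only [Vprod]
    exact Finset.prod_sdiff hsub
  set T := primesLT ((Acard a b c N : ℕ) : ℝ) \ primesLT z with hT
  have hTmem : ∀ p ∈ T, p.Prime ∧ 3 ≤ p ∧ z ≤ (p : ℝ) ∧ (p : ℝ) < (Acard a b c N : ℝ) := by
    intro p hpT
    rw [hT, Finset.mem_sdiff, mem_primesLT] at hpT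
    obtain ⟨⟨hp, hpA⟩, hnz⟩ := hpT
    have hzp : z ≤ (p : ℝ) := by
      by_contra hlt
      exact hnz (mem_primesLT.mpr ⟨hp, lt_of_not_ge hlt⟩)
    have h3 : 3 ≤ p := by
      have h3' : (3 : ℝ) ≤ (p : ℝ) := le_trans hz hzp
      exact_mod_cast h3'
    exact ⟨hp, h3, hzp, hpA⟩
  have hT0 : 0 ≤ ∏ p ∈ T, (1 - (rho a b c p : ℝ) / p) :=
    Finset.prod_nonneg fun p hp => hfac0 p (hTmem p hp).1
  constructor
  · rw [← hkey]
    have h1 : (∏ p ∈ T, (1 - (rho a b c p : ℝ) / p)) ≤ 1 :=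
      Finset.prod_le_one (fun p hp => hfac0 p (hTmem p hp).1)
        (fun p hp => hfac1 p (hTmem p hp).1)
    exact mul_le_of_le_one_left hVz h1
  · have hTS : T ⊆ (Finset.range (Acard a b c N + 1)).filter
        (fun p : ℕ => p.Prime ∧ z ≤ (p : ℝ)) := by
      intro p hp
      obtain ⟨hp1, _, hp3, hp4⟩ := hTmem p hp
      simp only [Finset.mem_filter, Finset.mem_range]
      have hlt : p < Acard a b c N := by exact_mod_cast hp4
      exact ⟨by omega, hp1, hp3⟩
    have hsum : ∑ p ∈ T, (lamArith D p : ℝ) / p ≤ deltaSum a b c N D z := by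
      unfold deltaSum
      apply Finset.sum_le_sum_of_subset_of_nonneg hTS
      intro p hp _
      have hp' : p.Prime := (Finset.mem_filter.mp hp).2.1
      apply div_nonneg _ (by positivity)
      exact_mod_cast lam_nonneg D hp'
    have hexp : ∏ p ∈ T, Real.exp (2 * (lamArith D p : ℝ) / p)
        ≤ Real.exp (2 * deltaSum a b c N D z) := by
      rw [← Real.exp_sum]
      apply Real.exp_le_exp.mpr
      calc ∑ p ∈ T, 2 * (lamArith D p : ℝ) / p
          = 2 * ∑ p ∈ T, (lamArith D p : ℝ) / p := by
            rw [Finset.mul_sum]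
            exact Finset.sum_congr rfl fun p _ => by ring
        _ ≤ 2 * deltaSum a b c N D z := by linarith
    have hone : (1 : ℝ) ≤ (∏ p ∈ T, (1 - (rho a b c p : ℝ) / p)) *
        Real.exp (2 * deltaSum a b c N D z) := by
      calc (1 : ℝ) ≤ ∏ p ∈ T, ((1 - (rho a b c p : ℝ) / p) *
            Real.exp (2 * (lamArith D p : ℝ) / p)) := by
            apply le_trans (le_of_eq (Finset.prod_const_one (s := T)).symm)
            apply Finset.prod_le_prod (fun _ _ => zero_le_one)
            intro p hp
            obtain ⟨hp1, hp2, _, _⟩ := hTmem p hp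
            have hki := key_ineq hp2 (Int.natCast_nonneg (rho a b c p))
              (rho_le_lam a b c D hD hgcd hp1 hp2) (lam_le_two D hp1)
            push_cast at hki ⊢
            exact hki
        _ = (∏ p ∈ T, (1 - (rho a b c p : ℝ) / p)) *
            ∏ p ∈ T, Real.exp (2 * (lamArith D p : ℝ) / p) := Finset.prod_mul_distrib
        _ ≤ _ := mul_le_mul_of_nonneg_left hexp hT0
    calc Vprod a b c z
        ≤ Vprod a b c z * ((∏ p ∈ T, (1 - (rho a b c p : ℝ) / p)) *
          Real.exp (2 * deltaSum a b c N D z)) := le_mul_of_one_le_right hVz hone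
      _ = ((∏ p ∈ T, (1 - (rho a b c p : ℝ) / p)) * Vprod a b c z) *
          Real.exp (2 * deltaSum a b c N D z) := by ring
      _ = Vprod a b c ((Acard a b c N : ℕ) : ℝ) * Real.exp (2 * deltaSum a b c N D z) := by
          rw [hkey]
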